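/- Let P and Q be instance-solution problems and let W be a weakness property containing the computable sets. If P preserves W and Q does not preserve W, then there exists a Turing ideal I ⊆ W such that every X ∈ I that is an instance of P has a solution Y ∈ I, while some X ∈ I that is an instance of Q has no solution in I. (Hence Q does not hold in every ω-model satisfying P.) -/

import Mathlib

namespace IterJump

open scoped Classical

/-- `RecIn g f` : the partial function `f` is partial recursive relative to the
total oracle `g : ℕ → ℕ`.  This mirrors `Nat.Partrec` with an extra `oracle` clause. -/
inductive RecIn (g : ℕ → ℕ) : (ℕ →. ℕ) → Prop
  | zero : RecIn g (pure 0)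
  | succ : RecIn g Nat.succ
  | left : RecIn g fun n => (Nat.unpair n).1
  | right : RecIn g fun n => (Nat.unpair n).2
  | oracle : RecIn g fun n => Part.some (g n)
  | pair {f h : ℕ →. ℕ} : RecIn g f → RecIn g h →
      RecIn g fun n => Nat.pair <$> f n <*> h n
  | comp {f h : ℕ →. ℕ} : RecIn g f → RecIn g h →
      RecIn g fun n => h n >>= f
  | prec {f h : ℕ →. ℕ} : RecIn g f → RecIn g h →
      RecIn g (Nat.unpaired fun a n =>
        n.rec (f a) fun y IH => do
          let i ← IH
          h (Nat.pair a (Nat.pair y i)))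
  | rfind {f : ℕ →. ℕ} : RecIn g f →
      RecIn g fun a => Nat.rfind fun n => (fun m => m = 0) <$> f (Nat.pair a n)

/-- Codes for oracle machines: `Nat.Partrec.Code` with an extra `oracle` constructor. -/
inductive OCode : Type
  | zero : OCode
  | succ : OCode
  | left : OCode
  | right : OCode
  | oracle : OCode
  | pair : OCode → OCode → OCode
  | comp : OCode → OCode → OCode
  | prec : OCode → OCode → OCode
  | rfind' : OCode → OCode

/-- Evaluation of an oracle code relative to the total oracle `g`. -/
def OCode.eval (g : ℕ → ℕ) : OCode → ℕ →. ℕ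
  | OCode.zero => pure 0
  | OCode.succ => fun n => Part.some (n + 1)
  | OCode.left => fun n => Part.some (Nat.unpair n).1
  | OCode.right => fun n => Part.some (Nat.unpair n).2
  | OCode.oracle => fun n => Part.some (g n)
  | OCode.pair cf cg => fun n => Nat.pair <$> OCode.eval g cf n <*> OCode.eval g cg n
  | OCode.comp cf cg => fun n => OCode.eval g cg n >>= OCode.eval g cf
  | OCode.prec cf cg =>
    Nat.unpaired fun a n =>
      n.rec (OCode.eval g cf a) fun y IH => do
        let i ← IH
        OCode.eval g cg (Nat.pair a (Nat.pair y i))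
  | OCode.rfind' cf =>
    Nat.unpaired fun a m =>
      (Nat.rfind fun n => (fun x => x = 0) <$> OCode.eval g cf (Nat.pair a (n + m))).map (· + m)

/-- A standard numbering of oracle codes (adapted from `Nat.Partrec.Code.ofNatCode`). -/
def ofNatOCode : ℕ → OCode
  | 0 => OCode.zero
  | 1 => OCode.succ
  | 2 => OCode.left
  | 3 => OCode.right
  | 4 => OCode.oracle
  | n + 5 =>
    let m := n.div2.div2
    have hm : m < n + 5 := by
      simp only [m, Nat.div2_val]
      exact lt_of_le_of_lt (le_trans (Nat.div_le_self _ _) (Nat.div_le_self _ _))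
        (Nat.lt_succ_of_le (Nat.le_add_right _ 4))
    have m1 : m.unpair.1 < n + 5 := lt_of_le_of_lt m.unpair_left_le hm
    have m2 : m.unpair.2 < n + 5 := lt_of_le_of_lt m.unpair_right_le hm
    match n.bodd, n.div2.bodd with
    | false, false => OCode.pair (ofNatOCode m.unpair.1) (ofNatOCode m.unpair.2)
    | false, true => OCode.comp (ofNatOCode m.unpair.1) (ofNatOCode m.unpair.2)
    | true, false => OCode.prec (ofNatOCode m.unpair.1) (ofNatOCode m.unpair.2)
    | true, true => OCode.rfind' (ofNatOCode m)
decreasing_by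
  all_goals first
    | exact m1 | exact m2 | exact hm
    | exact Nat.le_of_lt_succ m1 | exact Nat.le_of_lt_succ m2 | exact Nat.le_of_lt_succ hm

/-- `phi g e` = `Φ_e^g`, the `e`-th partial function relative to the oracle `g`. -/
def phi (g : ℕ → ℕ) (e : ℕ) : ℕ →. ℕ := (ofNatOCode e).eval g

/-- Characteristic function of a set of naturals. -/
noncomputable def chi (A : Set ℕ) : ℕ → ℕ := fun n => if n ∈ A then 1 else 0

/-- `X` computes the total function `f`. -/
def ComputesFun (X : Set ℕ) (f : ℕ → ℕ) : Prop :=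
  RecIn (chi X) fun n => Part.some (f n)

/-- Turing reducibility `A ≤_T B` for sets of naturals. -/
def TLE (A B : Set ℕ) : Prop := ComputesFun B (chi A)

/-- Effective join (recursive join) of two sets. -/
def join (A B : Set ℕ) : Set ℕ :=
  {n | (n % 2 = 0 ∧ n / 2 ∈ A) ∨ (n % 2 = 1 ∧ n / 2 ∈ B)}

/-- The Turing jump of `A`. -/
def jump (A : Set ℕ) : Set ℕ := {e | (phi (chi A) e e).Dom}

/-- The `m`-th iterated Turing jump. -/
def jumpIter : ℕ → Set ℕ → Set ℕ
  | 0, A => A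
  | m + 1, A => jump (jumpIter m A)

/-- A (nonempty) Turing ideal: closed downward under `≤_T` and under join. -/
def TuringIdeal (I : Set (Set ℕ)) : Prop :=
  I.Nonempty ∧ (∀ A ∈ I, ∀ B : Set ℕ, TLE B A → B ∈ I) ∧
    (∀ A ∈ I, ∀ B ∈ I, join A B ∈ I)

/-- `f` is diagonally noncomputable (DNC) over the set `D`. -/
def DNCFun (D : Set ℕ) (f : ℕ → ℕ) : Prop :=
  ∀ e v : ℕ, v ∈ phi (chi D) e e → f e ≠ v

/-- The set `X` is DNC over `D`: `X` computes a DNC function over `D`. -/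
def DNCSet (D X : Set ℕ) : Prop := ∃ f : ℕ → ℕ, ComputesFun X f ∧ DNCFun D f

/-- `g` is `h`-DNC over `D`: DNC over `D` and bounded by `h`. -/
def HDNCFun (h : ℕ → ℕ) (D : Set ℕ) (g : ℕ → ℕ) : Prop :=
  DNCFun D g ∧ ∀ x, g x < h x

/-- The set `X` is `h`-DNC over `D`: `X` computes an `h`-bounded DNC function over `D`. -/
def HDNCSet (h : ℕ → ℕ) (D X : Set ℕ) : Prop :=
  ∃ g : ℕ → ℕ, ComputesFun X g ∧ HDNCFun h D g

/-- `T ⊆ 2^{<ℕ}` is a tree: closed under prefixes. -/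
def IsTree (T : Set (List Bool)) : Prop :=
  ∀ σ ∈ T, ∀ τ : List Bool, τ <+: σ → τ ∈ T

/-- Characteristic function (on codes) of a set of binary strings. -/
noncomputable def treeChi (T : Set (List Bool)) : ℕ → ℕ :=
  fun n => if ∃ σ ∈ T, Encodable.encode σ = n then 1 else 0

/-- `Y ≫ X` : `Y` is of PA degree over `X`, i.e. `Y` computes a path through every
`X`-computable infinite subtree of `2^{<ℕ}`. -/
def PAover (Y X : Set ℕ) : Prop :=
  ∀ T : Set (List Bool), IsTree T → T.Infinite → ComputesFun X (treeChi T) →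
    ∃ f : ℕ → Bool, (∀ n : ℕ, (List.ofFn fun i : Fin n => f i.val) ∈ T) ∧
      ComputesFun Y (fun n => cond (f n) 1 0)

/-- `σ` is an initial segment of the infinite binary sequence `X`. -/
def PrefixOfSeq (σ : List Bool) (X : ℕ → Bool) : Prop :=
  σ = List.ofFn fun i : Fin σ.length => X i.val

/-- The open subset of Cantor space generated by the strings in `S` has measure
at most `2^{-n}`: for each `k`, at most a `2^{-n}` fraction of the length-`k`
strings extend an element of `S`. -/
def MeasureLE (S : Set (List Bool)) (n : ℕ) : Prop :=
  ∀ k : ℕ, Nat.card {τ : Fin k → Bool // ∃ σ ∈ S, σ <+: List.ofFn τ} * 2 ^ n ≤ 2 ^ k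

/-- `W` is computably enumerable in the set `D`. -/
def CEin (D : Set ℕ) (W : Set ℕ) : Prop :=
  ∃ f : ℕ →. ℕ, RecIn (chi D) f ∧ W = f.Dom

/-- `U` is a Martin-Löf test over `D`: a uniformly `Σ⁰₁(D)` sequence of open sets
of Cantor space with `μ(U n) ≤ 2^{-n}`. -/
def MLTest (D : Set ℕ) (U : ℕ → Set (List Bool)) : Prop :=
  CEin D {p : ℕ | ∃ n : ℕ, ∃ σ ∈ U n, p = Nat.pair n (Encodable.encode σ)} ∧
    ∀ n, MeasureLE (U n) n

/-- The infinite binary sequence associated with a set of naturals. -/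
noncomputable def setSeq (A : Set ℕ) : ℕ → Bool := fun n => if n ∈ A then true else false

/-- `R` is 1-random over `D`: `R` passes every Martin-Löf test over `D`. -/
def Random1 (D R : Set ℕ) : Prop :=
  ∀ U : ℕ → Set (List Bool), MLTest D U →
    ∃ n : ℕ, ∀ σ ∈ U n, ¬ PrefixOfSeq σ (setSeq R)

/-- `G` computes a set that is 1-random over `D`. -/
def ComputesRandom (D G : Set ℕ) : Prop := ∃ R : Set ℕ, TLE R G ∧ Random1 D R

/-- `f` dominates `g`: `f n ≥ g n` for all sufficiently large `n`. -/
def Dominates (f g : ℕ → ℕ) : Prop := ∃ N : ℕ, ∀ n ≥ N, g n ≤ f n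

/-- `A =* B` : the symmetric difference of `A` and `B` is finite. -/
def EqStar (A B : Set ℕ) : Prop := ((A \ B) ∪ (B \ A)).Finite

/-- An instance-solution problem `P` preserves the weakness property `W` if for
every `Z ∈ W` and every `Z`-computable instance `X`, some solution `Y ∈ P X`
satisfies `Z ⊕ Y ∈ W`. -/
def Preserves (P : Set ℕ → Set (Set ℕ)) (W : Set (Set ℕ)) : Prop :=
  ∀ Z ∈ W, ∀ X : Set ℕ, TLE X Z → ∃ Y ∈ P X, join Z Y ∈ W

/-! ### Auxiliary machinery for the proof -/

/-- Encoding of oracle codes, inverse to `ofNatOCode`. -/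
def encodeOCode : OCode → ℕ
  | OCode.zero => 0
  | OCode.succ => 1
  | OCode.left => 2
  | OCode.right => 3
  | OCode.oracle => 4
  | OCode.pair cf cg => 2 * (2 * Nat.pair (encodeOCode cf) (encodeOCode cg)) + 5
  | OCode.comp cf cg => 2 * (2 * Nat.pair (encodeOCode cf) (encodeOCode cg) + 1) + 5
  | OCode.prec cf cg => (2 * (2 * Nat.pair (encodeOCode cf) (encodeOCode cg)) + 1) + 5
  | OCode.rfind' cf => (2 * (2 * encodeOCode cf + 1) + 1) + 5

theorem ofNatOCode_encode : ∀ c : OCode, ofNatOCode (encodeOCode c) = c := fun c => by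
  induction c <;> simp [encodeOCode, ofNatOCode, Nat.div2_val, *]

/-- Computable (partial recursive) functions are `RecIn` any oracle. -/
theorem recIn_of_partrec {f : ℕ →. ℕ} (h : Nat.Partrec f) (g : ℕ → ℕ) : RecIn g f := by
  induction h with
  | zero => exact RecIn.zero
  | succ => exact RecIn.succ
  | left => exact RecIn.left
  | right => exact RecIn.right
  | pair _ _ hf hh => exact RecIn.pair hf hh
  | comp _ _ hf hh => exact RecIn.comp hf hh
  | prec _ _ hf hh => exact RecIn.prec hf hh
  | rfind _ hf => exact RecIn.rfind hf

/-- Relativization: if `f` is recursive in `g` and `g` is recursive in `h` then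
`f` is recursive in `h`. -/
theorem recIn_rel {g h : ℕ → ℕ} (hg : RecIn h fun n => Part.some (g n)) :
    ∀ {f : ℕ →. ℕ}, RecIn g f → RecIn h f := fun hf => by
  induction hf with
  | zero => exact RecIn.zero
  | succ => exact RecIn.succ
  | left => exact RecIn.left
  | right => exact RecIn.right
  | oracle => exact hg
  | pair _ _ hf hh => exact RecIn.pair hf hh
  | comp _ _ hf hh => exact RecIn.comp hf hh
  | prec _ _ hf hh => exact RecIn.prec hf hh
  | rfind _ hf => exact RecIn.rfind hf

/-- Every function recursive in `g` has an oracle code. -/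
theorem exists_ocode {g : ℕ → ℕ} {f : ℕ →. ℕ} (h : RecIn g f) :
    ∃ c : OCode, OCode.eval g c = f := by
  induction h with
  | zero => exact ⟨OCode.zero, rfl⟩
  | succ => exact ⟨OCode.succ, rfl⟩
  | left => exact ⟨OCode.left, rfl⟩
  | right => exact ⟨OCode.right, rfl⟩
  | oracle => exact ⟨OCode.oracle, rfl⟩
  | pair _ _ hf hh =>
    obtain ⟨cf, rfl⟩ := hf; obtain ⟨ch, rfl⟩ := hh
    exact ⟨OCode.pair cf ch, rfl⟩
  | comp _ _ hf hh =>
    obtain ⟨cf, rfl⟩ := hf; obtain ⟨ch, rfl⟩ := hh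
    exact ⟨OCode.comp cf ch, rfl⟩
  | prec _ _ hf hh =>
    obtain ⟨cf, rfl⟩ := hf; obtain ⟨ch, rfl⟩ := hh
    exact ⟨OCode.prec cf ch, rfl⟩
  | rfind _ hf =>
    obtain ⟨cf, rfl⟩ := hf
    refine ⟨OCode.comp (OCode.rfind' cf) (OCode.pair (OCode.pair OCode.left OCode.right)
      OCode.zero), ?_⟩
    funext n
    simp [OCode.eval, Seq.seq, pure, PFun.pure, Part.map_id']

/-- Total functions recursive in `g`. -/
def RecFun (g f : ℕ → ℕ) : Prop := RecIn g fun n => Part.some (f n)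

theorem RecFun.of_eq {g f f' : ℕ → ℕ} (h : RecFun g f) (e : ∀ n, f n = f' n) :
    RecFun g f' := by
  have : f = f' := funext e
  exact this ▸ h

theorem recFun_oracle (g : ℕ → ℕ) : RecFun g g := RecIn.oracle

theorem recFun_of_primrec {f : ℕ → ℕ} (h : Nat.Primrec f) (g : ℕ → ℕ) : RecFun g f :=
  recIn_of_partrec (Nat.Partrec.of_primrec h) g

theorem RecFun.comp {g f h : ℕ → ℕ} (hf : RecFun g f) (hh : RecFun g h) :
    RecFun g fun n => f (h n) := by
  have h2 := RecIn.comp hf hh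
  have e : (fun n => (fun n => Part.some (h n)) n >>= fun n => Part.some (f n))
      = fun n => Part.some (f (h n)) := by funext n; simp
  rwa [e] at h2

theorem RecFun.pairf {g f h : ℕ → ℕ} (hf : RecFun g f) (hh : RecFun g h) :
    RecFun g fun n => Nat.pair (f n) (h n) := by
  have h2 := RecIn.pair hf hh
  have e : (fun n => Nat.pair <$> (fun n => Part.some (f n)) n <*> (fun n => Part.some (h n)) n)
      = fun n => Part.some (Nat.pair (f n) (h n)) := by funext n; simp [Seq.seq]
  rwa [e] at h2

theorem tle_refl (A : Set ℕ) : TLE A A := RecIn.oracle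

theorem tle_trans {A B C : Set ℕ} (h1 : TLE A B) (h2 : TLE B C) : TLE A C :=
  recIn_rel h2 h1

theorem chi_join (A B : Set ℕ) (n : ℕ) :
    chi (join A B) n = (1 - n % 2) * chi A (n / 2) + n % 2 * chi B (n / 2) := by
  rcases Nat.mod_two_eq_zero_or_one n with h | h <;> simp [chi, join, Set.mem_setOf_eq, h]

theorem chi_join_left (A B : Set ℕ) (n : ℕ) : chi A n = chi (join A B) (2 * n) := by
  have h2 : 2 * n % 2 = 0 := Nat.mul_mod_right 2 n
  have h3 : 2 * n / 2 = n := Nat.mul_div_cancel_left n (by norm_num)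
  simp [chi_join, h2, h3]

theorem chi_join_right (A B : Set ℕ) (n : ℕ) : chi B n = chi (join A B) (2 * n + 1) := by
  have h2 : (2 * n + 1) % 2 = 1 := by omega
  have h3 : (2 * n + 1) / 2 = n := by omega
  simp [chi_join, h2, h3]

theorem primrec_double : Nat.Primrec fun n => 2 * n :=
  Primrec.nat_iff.mp (Primrec.nat_mul.comp (Primrec.const 2) Primrec.id)

theorem primrec_double_succ : Nat.Primrec fun n => 2 * n + 1 :=
  Primrec.nat_iff.mp
    (Primrec.succ.comp (Primrec.nat_mul.comp (Primrec.const 2) Primrec.id))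

theorem tle_join_left (A B : Set ℕ) : TLE A (join A B) :=
  ((recFun_oracle (chi (join A B))).comp
    (recFun_of_primrec primrec_double _)).of_eq fun n => (chi_join_left A B n).symm

theorem tle_join_right (A B : Set ℕ) : TLE B (join A B) :=
  ((recFun_oracle (chi (join A B))).comp
    (recFun_of_primrec primrec_double_succ _)).of_eq fun n => (chi_join_right A B n).symm

theorem tle_join {A B Z : Set ℕ} (hA : TLE A Z) (hB : TLE B Z) : TLE (join A B) Z := by
  have hdiv : RecFun (chi Z) fun n => n / 2 :=
    recFun_of_primrec (Primrec.nat_iff.mp (Primrec.nat_div.comp Primrec.id (Primrec.const 2))) _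
  have hA' : RecFun (chi Z) fun n => chi A (n / 2) := RecFun.comp hA hdiv
  have hB' : RecFun (chi Z) fun n => chi B (n / 2) := RecFun.comp hB hdiv
  have hu : RecFun (chi Z) fun n => Nat.pair n (Nat.pair (chi A (n / 2)) (chi B (n / 2))) :=
    (recFun_of_primrec Nat.Primrec.id _).pairf (hA'.pairf hB')
  have hF : Nat.Primrec fun m =>
      (1 - (Nat.unpair m).1 % 2) * (Nat.unpair (Nat.unpair m).2).1
        + (Nat.unpair m).1 % 2 * (Nat.unpair (Nat.unpair m).2).2 := by
    apply Primrec.nat_iff.mp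
    have u1 : Primrec fun m : ℕ => (Nat.unpair m).1 := Primrec.fst.comp Primrec.unpair
    have u2 : Primrec fun m : ℕ => (Nat.unpair m).2 := Primrec.snd.comp Primrec.unpair
    have u21 : Primrec fun m : ℕ => (Nat.unpair (Nat.unpair m).2).1 :=
      (Primrec.fst.comp Primrec.unpair).comp u2
    have u22 : Primrec fun m : ℕ => (Nat.unpair (Nat.unpair m).2).2 :=
      (Primrec.snd.comp Primrec.unpair).comp u2
    have hmod : Primrec fun m : ℕ => (Nat.unpair m).1 % 2 :=
      Primrec.nat_mod.comp u1 (Primrec.const 2)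
    exact Primrec.nat_add.comp
      (Primrec.nat_mul.comp (Primrec.nat_sub.comp (Primrec.const 1) hmod) u21)
      (Primrec.nat_mul.comp hmod u22)
  exact ((recFun_of_primrec hF _).comp hu).of_eq fun n => by
    simp [chi_join]

/-- Decoding a set from an oracle code relative to a set. -/
noncomputable def decodeSet (e : ℕ) (A : Set ℕ) : Set ℕ := {m | 1 ∈ phi (chi A) e m}

theorem decodeSet_eq {A X : Set ℕ} {e : ℕ}
    (h : phi (chi A) e = fun n => Part.some (chi X n)) : decodeSet e A = X := by
  ext m
  simp only [decodeSet, Set.mem_setOf_eq, h, Part.mem_some_iff, chi]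
  by_cases hm : m ∈ X <;> simp [hm]

/-- One step of the chain construction: try to add a `P`-solution of the decoded
instance while staying in `W`. -/
noncomputable def chainStep (P : Set ℕ → Set (Set ℕ)) (W : Set (Set ℕ))
    (X B : Set ℕ) : Set ℕ :=
  if h : ∃ Y, Y ∈ P X ∧ join B Y ∈ W then join B h.choose else B

/-- The chain of oracles whose downward closure is the desired Turing ideal. -/
noncomputable def chain (P : Set ℕ → Set (Set ℕ)) (W : Set (Set ℕ)) (Z0 : Set ℕ) :
    ℕ → Set ℕ
  | 0 => Z0
  | s + 1 =>
      chainStep P W (decodeSet (Nat.unpair s).2 (chain P W Z0 (Nat.unpair s).1))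
        (chain P W Z0 s)
  decreasing_by
  · exact Nat.lt_succ_of_le (Nat.unpair_left_le s)
  · exact Nat.lt_succ_self s

theorem tle_chain_succ (P : Set ℕ → Set (Set ℕ)) (W : Set (Set ℕ)) (Z0 : Set ℕ) (s : ℕ) :
    TLE (chain P W Z0 s) (chain P W Z0 (s + 1)) := by
  rw [chain, chainStep]
  split
  · exact tle_join_left _ _
  · exact tle_refl _

theorem tle_chain_mono (P : Set ℕ → Set (Set ℕ)) (W : Set (Set ℕ)) (Z0 : Set ℕ)
    {m n : ℕ} (h : m ≤ n) : TLE (chain P W Z0 m) (chain P W Z0 n) := by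
  induction n with
  | zero => rw [Nat.le_zero.mp h]; exact tle_refl _
  | succ n ih =>
    rcases Nat.eq_or_lt_of_le h with h' | h'
    · rw [h']; exact tle_refl _
    · exact tle_trans (ih (Nat.lt_succ_iff.mp h')) (tle_chain_succ P W Z0 n)

/-- if `P` preserves the weakness property `W` (which contains the
computable sets) and `Q` does not, then some ω-model (Turing ideal) within `W`
solves all `P`-instances but fails to solve some `Q`-instance. -/
theorem preservation_separation (P Q : Set ℕ → Set (Set ℕ)) (W : Set (Set ℕ))
    (hWdown : ∀ A ∈ W, ∀ B : Set ℕ, TLE B A → B ∈ W)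
    (hWcomp : ∀ A : Set ℕ, TLE A ∅ → A ∈ W)
    (hP : Preserves P W) (hQ : ¬ Preserves Q W) :
    ∃ I : Set (Set ℕ), TuringIdeal I ∧ I ⊆ W ∧
      (∀ X ∈ I, ∃ Y ∈ P X, Y ∈ I) ∧
      (∃ X ∈ I, ∀ Y ∈ Q X, Y ∉ I) := by
  -- Since `Q` does not preserve `W`, pick a witness `Z0 ∈ W` and an instance `X0 ≤ Z0`
  -- all of whose solutions escape `W` when joined with `Z0`.
  simp only [Preserves, not_forall] at hQ
  obtain ⟨Z0, hZ0W, X0, hX0le, hX0⟩ := hQ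
  push_neg at hX0
  -- The chain of oracles
  set Z : ℕ → Set ℕ := chain P W Z0 with hZ
  have hZzero : Z 0 = Z0 := by rw [hZ, chain]
  -- Every element of the chain is in `W`.
  have hZW : ∀ s, Z s ∈ W := by
    intro s
    induction s with
    | zero => rw [hZzero]; exact hZ0W
    | succ s ih =>
      rw [hZ, chain, chainStep]
      split
      · next h => exact h.choose_spec.2
      · exact ih
  set I : Set (Set ℕ) := {V | ∃ n, TLE V (Z n)} with hI
  have hmemI : ∀ {V : Set ℕ}, V ∈ I ↔ ∃ n, TLE V (Z n) := fun {V} => Iff.rfl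
  refine ⟨I, ⟨⟨Z0, ⟨0, by rw [hZzero]; exact tle_refl Z0⟩⟩, ?_, ?_⟩, ?_, ?_, ?_⟩
  · -- downward closure
    rintro A ⟨n, hA⟩ B hBA
    exact ⟨n, tle_trans hBA hA⟩
  · -- closure under join
    rintro A ⟨m, hA⟩ B ⟨n, hB⟩
    refine ⟨max m n, tle_join ?_ ?_⟩
    · exact tle_trans hA (tle_chain_mono P W Z0 (le_max_left m n))
    · exact tle_trans hB (tle_chain_mono P W Z0 (le_max_right m n))
  · -- `I ⊆ W`
    rintro A ⟨n, hA⟩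
    exact hWdown _ (hZW n) _ hA
  · -- `P`-closure
    rintro X ⟨n, hXn⟩
    obtain ⟨c, hc⟩ := exists_ocode hXn
    set s : ℕ := Nat.pair n (encodeOCode c) with hs
    have hdec : decodeSet (Nat.unpair s).2 (Z (Nat.unpair s).1) = X := by
      rw [hs, Nat.unpair_pair]
      exact decodeSet_eq (by rw [phi, ofNatOCode_encode]; exact hc)
    have hXs : TLE X (Z s) :=
      tle_trans hXn (tle_chain_mono P W Z0 (Nat.left_le_pair n (encodeOCode c)))
    have hex : ∃ Y, Y ∈ P X ∧ join (Z s) Y ∈ W := by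
      obtain ⟨Y, hY1, hY2⟩ := hP (Z s) (hZW s) X hXs
      exact ⟨Y, hY1, hY2⟩
    have hstep0 : Z (s + 1) = chainStep P W X (Z s) := by
      show chain P W Z0 (s + 1) = _
      rw [chain]
      simp only [← hZ, hdec]
    have hstep : Z (s + 1) = join (Z s) hex.choose := by
      rw [hstep0, chainStep, dif_pos hex]
    refine ⟨hex.choose, hex.choose_spec.1, s + 1, ?_⟩
    rw [hstep]
    exact tle_join_right _ _
  · -- `Q`-failure
    refine ⟨X0, ⟨0, by rw [hZzero]; exact hX0le⟩, ?_⟩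
    rintro Y hYQ ⟨n, hYn⟩
    refine hX0 Y hYQ (hWdown _ (hZW n) _ (tle_join ?_ hYn))
    exact tle_trans (show TLE Z0 (Z 0) by rw [hZzero]; exact tle_refl Z0)
      (tle_chain_mono P W Z0 (Nat.zero_le n))


end IterJump
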